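/- Every radially symmetric probability density f on ℝ^n that is bounded by 1 is less peaked than the indicator of the centered Euclidean ball of volume 1: for every origin-symmetric convex set C ⊆ ℝ^n, ∫_C f(x) dx ≤ |C ∩ B(0, r_n)|, where r_n = ω_n^{-1/n} so that |B(0, r_n)| = 1. -/

import Mathlib

open Metric Set MeasureTheory

/-- Polar-coordinate key lemma: if `h` is an integrable radial function whose integral over
every closed ball (and over the whole space) is nonpositive, then its integral over any
measurable star-shaped (about 0) set is nonpositive. -/
lemma aux_polar_nonpos {E : Type*} [NormedAddCommGroup E] [NormedSpace ℝ E]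
    [MeasurableSpace E] [BorelSpace E] [FiniteDimensional ℝ E] [Nontrivial E]
    (μ : Measure E) [μ.IsAddHaarMeasure]
    (h : E → ℝ) (hint : Integrable h μ)
    (hrad : ∀ x y : E, ‖x‖ = ‖y‖ → h x = h y)
    (C : Set E) (hCm : MeasurableSet C)
    (hstar : ∀ x ∈ C, ∀ a : ℝ, 0 < a → a < 1 → a • x ∈ C)
    (hball : ∀ t : ℝ, 0 < t → ∫ x in Metric.closedBall 0 t, h x ∂μ ≤ 0)
    (htot : ∫ x, h x ∂μ ≤ 0) :
    ∫ x in C, h x ∂μ ≤ 0 := by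
  set ν := μ.toSphere with hν
  set ρ := Measure.volumeIoiPow (Module.finrank ℝ E - 1) with hρ
  obtain ⟨θ₀, hθ₀⟩ : (sphere (0:E) 1).Nonempty :=
    NormedSpace.sphere_nonempty.mpr zero_le_one
  have hnorm : ∀ (θ : sphere (0:E) 1) (t : Ioi (0:ℝ)), ‖(t:ℝ) • (θ:E)‖ = (t:ℝ) := by
    intro θ t
    rw [norm_smul, mem_sphere_zero_iff_norm.mp θ.2, mul_one, Real.norm_eq_abs,
      abs_of_pos (Set.mem_Ioi.mp t.2)]
  set w : Ioi (0:ℝ) → ℝ := fun t => h ((t:ℝ) • θ₀) with hw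
  have hwnorm : ∀ (θ : sphere (0:E) 1) (t : Ioi (0:ℝ)), h ((t:ℝ) • (θ:E)) = w t := by
    intro θ t
    refine hrad _ _ ?_
    rw [hnorm θ t, norm_smul, mem_sphere_zero_iff_norm.mp hθ₀, mul_one, Real.norm_eq_abs,
      abs_of_pos (Set.mem_Ioi.mp t.2)]
  -- master polar formula
  have key : ∀ D : Set E, MeasurableSet D →
      ∫ x in D, h x ∂μ =
        ∫ θ : sphere (0:E) 1, ∫ t : Ioi (0:ℝ),
          ({s : Ioi (0:ℝ) | (s:ℝ) • (θ:E) ∈ D}).indicator w t ∂ρ ∂ν := by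
    intro D hD
    have hI : Integrable (D.indicator h) μ := hint.indicator hD
    have hxcoe : ∀ x : ({0}ᶜ : Set E),
        (((homeomorphUnitSphereProd E x).2 : ℝ)) • ((homeomorphUnitSphereProd E x).1 : E)
          = (x : E) := by
      intro x
      rw [← homeomorphUnitSphereProd_symm_apply_coe, Homeomorph.symm_apply_apply]
    have hmap : Measure.map (Subtype.val)
        (μ.comap (Subtype.val : ({0}ᶜ : Set E) → E)) = μ := by
      rw [map_comap_subtype_coe (measurableSet_singleton _).compl,
        restrict_compl_singleton]
    have h1 : Integrable ((D.indicator h) ∘ (Subtype.val : ({0}ᶜ : Set E) → E))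
        (μ.comap Subtype.val) := by
      rw [← (MeasurableEmbedding.subtype_coe
        (measurableSet_singleton (0:E)).compl).integrable_map_iff, hmap]
      exact hI
    set G : sphere (0:E) 1 × Ioi (0:ℝ) → ℝ :=
      fun p => D.indicator h ((p.2 : ℝ) • (p.1 : E)) with hG
    have hGcomp : G ∘ (homeomorphUnitSphereProd E)
        = (D.indicator h) ∘ (Subtype.val : ({0}ᶜ : Set E) → E) := by
      funext x
      simp only [Function.comp_apply, hG, hxcoe x]
    have hGint : Integrable G (ν.prod ρ) := by
      rw [← (μ.measurePreserving_homeomorphUnitSphereProd.integrable_comp_emb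
        (Homeomorph.measurableEmbedding _)), hGcomp]
      exact h1
    have e1 : ∫ x in D, h x ∂μ = ∫ x, D.indicator h x ∂μ := (integral_indicator hD).symm
    have e2 : ∫ x : ({0}ᶜ : Set E), D.indicator h (x : E) ∂(μ.comap (↑))
        = ∫ x, D.indicator h x ∂μ := by
      rw [integral_subtype_comap (measurableSet_singleton _).compl,
        restrict_compl_singleton]
    have e3 : ∫ x : ({0}ᶜ : Set E), G (homeomorphUnitSphereProd E x) ∂(μ.comap (↑))
        = ∫ p, G p ∂(ν.prod ρ) :=
      μ.measurePreserving_homeomorphUnitSphereProd.integral_comp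
        (Homeomorph.measurableEmbedding _) G
    have e4 : ∫ x : ({0}ᶜ : Set E), G (homeomorphUnitSphereProd E x) ∂(μ.comap (↑))
        = ∫ x : ({0}ᶜ : Set E), D.indicator h (x : E) ∂(μ.comap (↑)) := by
      refine integral_congr_ae (Filter.Eventually.of_forall fun x => ?_)
      simp only [hG, hxcoe x]
    have e5 : ∫ p, G p ∂(ν.prod ρ) = ∫ θ, ∫ t, G (θ, t) ∂ρ ∂ν := integral_prod G hGint
    rw [e1, ← e2, ← e4, e3, e5]
    congr 1
    funext θ
    congr 1
    funext t
    by_cases hm : (t:ℝ) • (θ:E) ∈ D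
    · simp only [hG]
      rw [Set.indicator_of_mem hm, Set.indicator_of_mem (by exact hm), hwnorm θ t]
    · simp only [hG]
      rw [Set.indicator_of_notMem hm, Set.indicator_of_notMem (by exact hm)]
  -- total mass of the sphere measure
  have hκpos : 0 < (ν Set.univ).toReal := by
    refine ENNReal.toReal_pos ?_ (measure_ne_top _ _)
    rw [hν, Measure.toSphere_apply_univ]
    have h1 : (0:ENNReal) < (Module.finrank ℝ E : ENNReal) := by
      exact_mod_cast Nat.cast_pos.mpr Module.finrank_pos
    exact (ENNReal.mul_pos h1.ne' (measure_ball_pos μ 0 one_pos).ne').ne'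
  -- integrals of w over initial segments are nonpositive
  have hmle : ∀ u : ℝ, MeasurableSet {s : Ioi (0:ℝ) | (s:ℝ) ≤ u} := fun u =>
    measurable_subtype_coe measurableSet_Iic
  have hmlt : ∀ u : ℝ, MeasurableSet {s : Ioi (0:ℝ) | (s:ℝ) < u} := fun u =>
    measurable_subtype_coe measurableSet_Iio
  have hKle : ∀ u : ℝ, 0 < u → ∫ t in {s : Ioi (0:ℝ) | (s:ℝ) ≤ u}, w t ∂ρ ≤ 0 := by
    intro u hu
    have h1 := key (Metric.closedBall 0 u) measurableSet_closedBall
    have h2 : ∀ θ : sphere (0:E) 1,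
        {s : Ioi (0:ℝ) | (s:ℝ) • (θ:E) ∈ Metric.closedBall 0 u}
          = {s : Ioi (0:ℝ) | (s:ℝ) ≤ u} := by
      intro θ; ext s
      simp only [Set.mem_setOf_eq, mem_closedBall_zero_iff, hnorm θ s]
    simp only [h2] at h1
    rw [integral_const] at h1
    have h3 := hball u hu
    rw [h1, integral_indicator (hmle u), smul_eq_mul] at h3
    by_contra hc
    push_neg at hc
    change (ν univ).toReal * _ ≤ 0 at h3
    nlinarith [mul_pos hκpos hc]
  have hKlt : ∀ u : ℝ, 0 < u → ∫ t in {s : Ioi (0:ℝ) | (s:ℝ) < u}, w t ∂ρ ≤ 0 := by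
    intro u hu
    have h1 := key (Metric.ball 0 u) measurableSet_ball
    have h2 : ∀ θ : sphere (0:E) 1,
        {s : Ioi (0:ℝ) | (s:ℝ) • (θ:E) ∈ Metric.ball 0 u}
          = {s : Ioi (0:ℝ) | (s:ℝ) < u} := by
      intro θ; ext s
      simp only [Set.mem_setOf_eq, mem_ball_zero_iff, hnorm θ s]
    simp only [h2] at h1
    rw [integral_const] at h1
    have hae : (Metric.ball (0:E) u : Set E) =ᵐ[μ] Metric.closedBall 0 u := by
      rw [ae_eq_set]
      constructor
      · rw [Set.diff_eq_empty.mpr Metric.ball_subset_closedBall]; exact measure_empty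
      · rw [Metric.closedBall_diff_ball]; exact μ.addHaar_sphere 0 u
    have h3 : ∫ x in Metric.ball (0:E) u, h x ∂μ ≤ 0 := by
      rw [setIntegral_congr_set hae]; exact hball u hu
    rw [h1, integral_indicator (hmlt u), smul_eq_mul] at h3
    by_contra hc
    push_neg at hc
    change (ν univ).toReal * _ ≤ 0 at h3
    nlinarith [mul_pos hκpos hc]
  have hKinf : ∫ t, w t ∂ρ ≤ 0 := by
    have h1 := key Set.univ MeasurableSet.univ
    have h2 : ∀ θ : sphere (0:E) 1,
        {s : Ioi (0:ℝ) | (s:ℝ) • (θ:E) ∈ (Set.univ : Set E)} = Set.univ := by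
      intro θ; ext s; simp
    simp only [h2, Set.indicator_univ] at h1
    rw [integral_const, Measure.restrict_univ] at h1
    have h3 := htot
    rw [h1, smul_eq_mul] at h3
    by_contra hc
    push_neg at hc
    change (ν univ).toReal * _ ≤ 0 at h3
    nlinarith [mul_pos hκpos hc]
  -- conclude
  rw [key C hCm]
  refine integral_nonpos fun θ => ?_
  set S := {s : Ioi (0:ℝ) | (s:ℝ) • (θ:E) ∈ C} with hS
  have hSm : MeasurableSet S := hCm.preimage (measurable_subtype_coe.smul_const _)
  show ∫ t, S.indicator w t ∂ρ ≤ 0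
  rw [integral_indicator hSm]
  have hdown : ∀ t ∈ S, ∀ s : Ioi (0:ℝ), (s:ℝ) < (t:ℝ) → s ∈ S := by
    intro t ht s hst
    have htpos : (0:ℝ) < t := t.2
    have h1 : ((s:ℝ)/(t:ℝ)) • ((t:ℝ) • (θ:E)) = (s:ℝ) • (θ:E) := by
      rw [smul_smul, div_mul_cancel₀ _ htpos.ne']
    have h2 := hstar _ ht ((s:ℝ)/(t:ℝ)) (div_pos s.2 htpos) ((div_lt_one htpos).mpr hst)
    show (s:ℝ) • (θ:E) ∈ C
    rwa [← h1]
  rcases S.eq_empty_or_nonempty with hSe | ⟨t₀, ht₀⟩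
  · rw [hSe]; simp
  · by_cases hbdd : BddAbove (Subtype.val '' S)
    · set u := sSup (Subtype.val '' S) with hu
      have hu0 : (0:ℝ) < u := lt_of_lt_of_le t₀.2 (le_csSup hbdd ⟨t₀, ht₀, rfl⟩)
      have hsub : S ⊆ {s : Ioi (0:ℝ) | (s:ℝ) ≤ u} := fun s hs => le_csSup hbdd ⟨s, hs, rfl⟩
      have hsup : {s : Ioi (0:ℝ) | (s:ℝ) < u} ⊆ S := by
        intro s hs
        obtain ⟨a, ⟨t, htS, rfl⟩, hlt⟩ :=
          exists_lt_of_lt_csSup (⟨(t₀:ℝ), t₀, ht₀, rfl⟩ : (Subtype.val '' S).Nonempty)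
            (show (s:ℝ) < u from hs)
        exact hdown t htS s hlt
      by_cases huS : (⟨u, hu0⟩ : Ioi (0:ℝ)) ∈ S
      · have hSeq : S = {s : Ioi (0:ℝ) | (s:ℝ) ≤ u} := by
          refine Set.Subset.antisymm hsub fun s hs => ?_
          rcases lt_or_eq_of_le (show (s:ℝ) ≤ u from hs) with h' | h'
          · exact hsup h'
          · have : s = ⟨u, hu0⟩ := Subtype.ext h'
            rw [this]; exact huS
        rw [hSeq]; exact hKle u hu0
      · have hSeq : S = {s : Ioi (0:ℝ) | (s:ℝ) < u} := by
          refine Set.Subset.antisymm (fun s hs => ?_) hsup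
          rcases lt_or_eq_of_le (show (s:ℝ) ≤ u from hsub hs) with h' | h'
          · exact h'
          · have hseq : s = (⟨u, hu0⟩ : Ioi (0:ℝ)) := Subtype.ext h'
            exact absurd (hseq ▸ hs) huS
        rw [hSeq]; exact hKlt u hu0
    · have hSeq : S = Set.univ := by
        ext s
        simp only [Set.mem_univ, iff_true]
        obtain ⟨a, ⟨t, htS, rfl⟩, hlt⟩ := not_bddAbove_iff.mp hbdd (s:ℝ)
        exact hdown t htS s hlt
      rw [hSeq, Measure.restrict_univ]
      exact hKinf

theorem radial_density_less_peaked_than_ball (n : ℕ) (hn : 1 ≤ n)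
    (f : EuclideanSpace ℝ (Fin n) → ℝ) (hmeas : Measurable f)
    (hnonneg : ∀ x, 0 ≤ f x) (hbd : ∀ x, f x ≤ 1)
    (hint : ∫ x, f x = 1)
    (hradial : ∀ x y : EuclideanSpace ℝ (Fin n), ‖x‖ = ‖y‖ → f x = f y)
    (r : ℝ) (hr : volume (Metric.closedBall (0 : EuclideanSpace ℝ (Fin n)) r) = 1)
    (C : Set (EuclideanSpace ℝ (Fin n))) (hC : Convex ℝ C) (hsym : ∀ x ∈ C, -x ∈ C) :
    ∫ x in C, f x ≤
      (volume (C ∩ Metric.closedBall (0 : EuclideanSpace ℝ (Fin n)) r)).toReal := by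
  haveI : Nontrivial (EuclideanSpace ℝ (Fin n)) :=
    Module.nontrivial_of_finrank_pos (R := ℝ) (by rw [finrank_euclideanSpace_fin]; omega)
  have hr0 : 0 < r := by
    by_contra hle
    push_neg at hle
    rcases hle.lt_or_eq with hlt | heq
    · rw [Metric.closedBall_eq_empty.mpr hlt] at hr; simp at hr
    · rw [heq, Metric.closedBall_zero] at hr
      rw [measure_singleton] at hr
      simp at hr
  set B := Metric.closedBall (0 : EuclideanSpace ℝ (Fin n)) r with hB
  have hBmeas : MeasurableSet B := measurableSet_closedBall
  have hfint : Integrable f := by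
    by_contra hni
    rw [integral_undef hni] at hint
    norm_num at hint
  have hIint : Integrable (B.indicator (fun _ => (1:ℝ))) := by
    rw [integrable_indicator_iff hBmeas]
    refine (integrableOn_const_iff (C := (1:ℝ))).mpr (Or.inr ?_)
    rw [hr]; exact ENNReal.one_lt_top
  have hIB : ∫ x, B.indicator (fun _ => (1:ℝ)) x = 1 := by
    rw [integral_indicator hBmeas, setIntegral_const, measureReal_def, hr]
    norm_num
  set h := fun x => f x - B.indicator (fun _ => (1:ℝ)) x with hh
  have hhint : Integrable h := hfint.sub hIint
  have hhrad : ∀ x y : EuclideanSpace ℝ (Fin n), ‖x‖ = ‖y‖ → h x = h y := by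
    intro x y hxy
    have hmem : x ∈ B ↔ y ∈ B := by
      rw [hB, mem_closedBall_zero_iff, mem_closedBall_zero_iff, hxy]
    simp only [hh]
    rw [hradial x y hxy]
    by_cases hx : x ∈ B
    · rw [Set.indicator_of_mem hx, Set.indicator_of_mem (hmem.mp hx)]
    · rw [Set.indicator_of_notMem hx, Set.indicator_of_notMem (fun hy => hx (hmem.mpr hy))]
  have hball : ∀ t : ℝ, 0 < t →
      ∫ x in Metric.closedBall (0 : EuclideanSpace ℝ (Fin n)) t, h x ≤ 0 := by
    intro t ht
    have hfi : IntegrableOn f (Metric.closedBall (0 : EuclideanSpace ℝ (Fin n)) t) :=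
      hfint.integrableOn
    have hIi : IntegrableOn (B.indicator fun _ => (1:ℝ))
        (Metric.closedBall (0 : EuclideanSpace ℝ (Fin n)) t) := hIint.integrableOn
    simp only [hh]
    rw [integral_sub hfi hIi, sub_nonpos]
    have hind : ∫ x in Metric.closedBall (0 : EuclideanSpace ℝ (Fin n)) t,
        B.indicator (fun _ => (1:ℝ)) x
        = (volume (Metric.closedBall (0 : EuclideanSpace ℝ (Fin n)) t ∩ B)).toReal := by
      rw [setIntegral_indicator hBmeas, setIntegral_const, smul_eq_mul, mul_one, measureReal_def]
    rcases le_or_gt t r with hle | hlt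
    · have hsub : Metric.closedBall (0 : EuclideanSpace ℝ (Fin n)) t ⊆ B :=
        Metric.closedBall_subset_closedBall hle
      rw [hind, Set.inter_eq_left.mpr hsub]
      calc ∫ x in Metric.closedBall (0 : EuclideanSpace ℝ (Fin n)) t, f x
          ≤ ∫ _x in Metric.closedBall (0 : EuclideanSpace ℝ (Fin n)) t, (1:ℝ) := by
            refine setIntegral_mono_on hfi
              ((integrableOn_const_iff (C := (1:ℝ))).mpr (Or.inr measure_closedBall_lt_top))
              measurableSet_closedBall fun x _ => hbd x
        _ = (volume (Metric.closedBall (0 : EuclideanSpace ℝ (Fin n)) t)).toReal := by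
            rw [setIntegral_const, smul_eq_mul, mul_one, measureReal_def]
    · have hsub : B ⊆ Metric.closedBall (0 : EuclideanSpace ℝ (Fin n)) t :=
        Metric.closedBall_subset_closedBall hlt.le
      rw [hind, Set.inter_eq_right.mpr hsub, hr, ENNReal.toReal_one]
      calc ∫ x in Metric.closedBall (0 : EuclideanSpace ℝ (Fin n)) t, f x
          ≤ ∫ x, f x := setIntegral_le_integral hfint (Filter.Eventually.of_forall hnonneg)
        _ = 1 := hint
  have htot : ∫ x, h x ≤ 0 := by
    simp only [hh]
    rw [integral_sub hfint hIint, hint, hIB]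
    norm_num
  by_cases hCnull : volume C = 0
  · have h1 : ∫ x in C, f x = 0 := by
      rw [Measure.restrict_eq_zero.mpr hCnull]
      exact integral_zero_measure f
    rw [h1]
    exact ENNReal.toReal_nonneg
  · have hCint : (interior C).Nonempty := by
      by_contra hemp
      apply hCnull
      rw [Set.not_nonempty_iff_eq_empty] at hemp
      have hspan : affineSpan ℝ C ≠ ⊤ := by
        intro htop
        have h2 := (hC.interior_nonempty_iff_affineSpan_eq_top).mpr htop
        rw [hemp] at h2
        exact Set.not_nonempty_empty h2
      exact measure_mono_null (subset_affineSpan ℝ C)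
        (Measure.addHaar_affineSubspace _ _ hspan)
    have h0C : (0 : EuclideanSpace ℝ (Fin n)) ∈ C := by
      obtain ⟨x, hx⟩ : C.Nonempty := ⟨hCint.some, interior_subset hCint.some_mem⟩
      have h2 := hC hx (hsym x hx) (by norm_num : (0:ℝ) ≤ 1/2)
        (by norm_num : (0:ℝ) ≤ 1/2) (by norm_num)
      rw [smul_neg, add_neg_cancel] at h2
      exact h2
    set C' := interior C with hC'
    have hC'm : MeasurableSet C' := isOpen_interior.measurableSet
    have hstar : ∀ x ∈ C', ∀ a : ℝ, 0 < a → a < 1 → a • x ∈ C' := by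
      intro x hx a ha0 ha1
      have h2 := hC.combo_interior_closure_mem_interior hx (subset_closure h0C)
        ha0 (by linarith : (0:ℝ) ≤ 1 - a) (by ring)
      rwa [smul_zero, add_zero] at h2
    have haeC : C' =ᵐ[volume] C := by
      rw [ae_eq_set]
      refine ⟨?_, ?_⟩
      · rw [Set.diff_eq_empty.mpr interior_subset]; exact measure_empty
      · refine measure_mono_null (fun x hx => ?_) (hC.addHaar_frontier volume)
        exact ⟨subset_closure hx.1, hx.2⟩
    have hkey := aux_polar_nonpos volume h hhint hhrad C' hC'm hstar hball htot
    have h2 : (∫ x in C', f x) - ∫ x in C', B.indicator (fun _ => (1:ℝ)) x ≤ 0 := by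
      have hfi : IntegrableOn f C' := hfint.integrableOn
      have hIi : IntegrableOn (B.indicator fun _ => (1:ℝ)) C' := hIint.integrableOn
      have heq : ∫ x in C', h x
          = (∫ x in C', f x) - ∫ x in C', B.indicator (fun _ => (1:ℝ)) x := by
        simp only [hh]
        exact integral_sub hfi hIi
      rw [← heq]
      exact hkey
    have h3 : ∫ x in C', B.indicator (fun _ => (1:ℝ)) x = (volume (C' ∩ B)).toReal := by
      rw [setIntegral_indicator hBmeas, setIntegral_const, smul_eq_mul, mul_one, measureReal_def]
    have h4 : ∫ x in C, f x = ∫ x in C', f x := (setIntegral_congr_set haeC).symm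
    have h5 : volume (C ∩ B) = volume (C' ∩ B) :=
      (measure_congr (ae_eq_set_inter haeC.symm (Filter.EventuallyEq.refl _ _)))
    rw [h4, h5]
    linarith [h2, h3]
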